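/- Let Z ∈ {0,1}^{N×K} be a block membership matrix with all blocks nonempty and P = max_i (ZᵀZ)_{ii} the largest block size, and let V ∈ ℝ^{K×K} be orthogonal. Then for any two rows i, j with different block assignments (Z_i ≠ Z_j), the rows of 𝒰 = Z(ZᵀZ)^{−1/2}V satisfy ‖𝒰_i − 𝒰_j‖₂ ≥ √(2/P). -/

import Mathlib

open Matrix

/-- For a block membership matrix `Z` with nonempty blocks, largest block size `P`, and
orthogonal `V`, rows of `𝒰 = Z (ZᵀZ)^{−1/2} V` corresponding to different blocks are at
Euclidean distance at least `√(2/P)`. -/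
theorem stmt13 (N K : ℕ) (f : Fin N → Fin K)
    (Z : Matrix (Fin N) (Fin K) ℝ)
    (hZ : Z = Matrix.of fun i k => if f i = k then (1 : ℝ) else 0)
    (hblocks : ∀ k : Fin K, ∃ i : Fin N, f i = k)
    (P : ℕ)
    (hP : P = Finset.univ.sup (fun k : Fin K => (Finset.univ.filter fun i => f i = k).card))
    (V : Matrix (Fin K) (Fin K) ℝ) (hV₁ : V * Vᵀ = 1) (hV₂ : Vᵀ * V = 1)
    (𝒰 : Matrix (Fin N) (Fin K) ℝ)
    (h𝒰 : 𝒰 = Z * Matrix.diagonal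
        (fun k => (Real.sqrt ((Finset.univ.filter fun i => f i = k).card : ℝ))⁻¹) * V) :
    ∀ i j : Fin N, f i ≠ f j →
      Real.sqrt (2 / (P : ℝ)) ≤ Real.sqrt (∑ k, (𝒰 i k - 𝒰 j k) ^ 2) := by
  intro i j hij
  set n : Fin K → ℕ := fun k => (Finset.univ.filter fun i => f i = k).card with hn
  -- row formula
  have hrow : ∀ (i : Fin N) (k : Fin K),
      𝒰 i k = (Real.sqrt (n (f i)))⁻¹ * V (f i) k := by
    intro i k
    subst h𝒰 hZ
    simp [Matrix.mul_apply, Matrix.diagonal, Finset.sum_ite_eq, ite_mul, Finset.mul_sum,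
      Finset.sum_ite_eq']
    exact Or.inl rfl
  have hnpos : ∀ k, 0 < (n k : ℝ) := by
    intro k
    obtain ⟨i, hi⟩ := hblocks k
    have : 0 < n k := Finset.card_pos.mpr ⟨i, by simp [hi]⟩
    exact_mod_cast this
  have hnP : ∀ k, (n k : ℝ) ≤ P := by
    intro k
    have : n k ≤ P := hP ▸ Finset.le_sup (Finset.mem_univ k)
    exact_mod_cast this
  have hPpos : 0 < (P : ℝ) := lt_of_lt_of_le (hnpos (f i)) (hnP (f i))
  -- orthonormality of rows
  have hVV : ∀ a b : Fin K, ∑ k, V a k * V b k = if a = b then (1:ℝ) else 0 := by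
    intro a b
    have := congrFun (congrFun hV₁ a) b
    simpa [Matrix.mul_apply, Matrix.one_apply] using this
  set a := f i
  set b := f j
  have hsum : ∑ k, (𝒰 i k - 𝒰 j k) ^ 2 = (n a : ℝ)⁻¹ + (n b : ℝ)⁻¹ := by
    have h1 : ∑ k, (𝒰 i k - 𝒰 j k) ^ 2
        = (Real.sqrt (n a))⁻¹ ^ 2 * (∑ k, V a k * V a k)
          - 2 * ((Real.sqrt (n a))⁻¹ * (Real.sqrt (n b))⁻¹) * (∑ k, V a k * V b k)
          + (Real.sqrt (n b))⁻¹ ^ 2 * (∑ k, V b k * V b k) := by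
      simp only [hrow, Finset.mul_sum, Finset.sum_sub_distrib, Finset.sum_add_distrib]
      rw [← Finset.sum_sub_distrib, ← Finset.sum_add_distrib]
      apply Finset.sum_congr rfl
      intro k _
      ring
    rw [h1, hVV, hVV, hVV, if_neg hij, if_pos rfl, if_pos rfl]
    have ha : (Real.sqrt (n a))⁻¹ ^ 2 = (n a : ℝ)⁻¹ := by
      rw [← Real.sqrt_inv, Real.sq_sqrt (by positivity)]
    have hb : (Real.sqrt (n b))⁻¹ ^ 2 = (n b : ℝ)⁻¹ := by
      rw [← Real.sqrt_inv, Real.sq_sqrt (by positivity)]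
    rw [ha, hb]; ring
  rw [hsum]
  apply Real.sqrt_le_sqrt
  have h1 : (P : ℝ)⁻¹ ≤ (n a : ℝ)⁻¹ := by
    apply inv_anti₀ (hnpos a) (hnP a)
  have h2 : (P : ℝ)⁻¹ ≤ (n b : ℝ)⁻¹ := by
    apply inv_anti₀ (hnpos b) (hnP b)
  have : 2 / (P : ℝ) = (P:ℝ)⁻¹ + (P:ℝ)⁻¹ := by ring
  rw [this]
  exact add_le_add h1 h2
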